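/- Output-strict equilibrium-independent passivity of the learning block (dissipation inequality): let ε > 0, γ > 0, consider N players where player p has n^p actions, n = Σ_p n^p, and let σ : ℝⁿ → ℝⁿ apply the soft-max σ_ε blockwise, σ(z) = (σ_ε(z^p))_p. Fix z̄ ∈ ℝⁿ and define the storage function V(z) = Σ_p (lse_ε(z^p) − lse_ε(z̄^p) − σ_ε(z̄^p)ᵀ(z^p − z̄^p)). Then V(z) ≥ 0 for all z, V(z̄) = 0, and for every differentiable z : ℝ → ℝⁿ and continuous u : ℝ → ℝⁿ with ż(t) = γ(u(t) − z(t)) for all t, the derivative of t ↦ V(z(t)) satisfies d/dt V(z(t)) ≤ −γε‖σ(z(t)) − σ(z̄)‖₂² + γ(σ(z(t)) − σ(z̄))ᵀ(u(t) − z̄). -/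

import Mathlib

open Filter

/-- The soft-max function with temperature `ε`. -/
noncomputable def softmax (ε : ℝ) {m : ℕ} (w : Fin m → ℝ) : Fin m → ℝ :=
  fun i => Real.exp (w i / ε) / ∑ j, Real.exp (w j / ε)

/-- The log-sum-exp function with temperature `ε`. -/
noncomputable def lse (ε : ℝ) {m : ℕ} (w : Fin m → ℝ) : ℝ :=
  ε * Real.log (∑ j, Real.exp (w j / ε))

/-- The Bregman-divergence storage function
`V(z) = Σ_p (lse_ε(z^p) − lse_ε(z̄^p) − σ_ε(z̄^p)ᵀ(z^p − z̄^p))`. -/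
noncomputable def bregV (ε : ℝ) {N : ℕ} {nAct : Fin N → ℕ}
    (zbar z : ∀ p, Fin (nAct p) → ℝ) : ℝ :=
  ∑ p, (lse ε (z p) - lse ε (zbar p) - ∑ i, softmax ε (zbar p) i * (z p i - zbar p i))

lemma sumexp_pos {m : ℕ} (hm : 0 < m) (ε : ℝ) (w : Fin m → ℝ) :
    0 < ∑ j, Real.exp (w j / ε) := by
  haveI : Nonempty (Fin m) := Fin.pos_iff_nonempty.mp hm
  exact Finset.sum_pos (fun j _ => Real.exp_pos _) Finset.univ_nonempty

lemma softmax_pos {m : ℕ} (ε : ℝ) (w : Fin m → ℝ) (i : Fin m) :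
    0 < softmax ε w i :=
  div_pos (Real.exp_pos _) (sumexp_pos i.pos ε w)

lemma sum_softmax {m : ℕ} (hm : 0 < m) (ε : ℝ) (w : Fin m → ℝ) :
    ∑ i, softmax ε w i = 1 := by
  unfold softmax
  rw [← Finset.sum_div, div_self (sumexp_pos hm ε w).ne']

lemma softmax_le_one {m : ℕ} (ε : ℝ) (w : Fin m → ℝ) (i : Fin m) :
    softmax ε w i ≤ 1 := by
  rw [← sum_softmax i.pos ε w]
  exact Finset.single_le_sum (fun j _ => (softmax_pos ε w j).le) (Finset.mem_univ i)

lemma log_softmax {m : ℕ} {ε : ℝ} (hε : 0 < ε) (w : Fin m → ℝ) (i : Fin m) :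
    ε * Real.log (softmax ε w i) = w i - lse ε w := by
  unfold softmax lse
  rw [Real.log_div (Real.exp_ne_zero _) (sumexp_pos i.pos ε w).ne', Real.log_exp]
  field_simp

lemma log_sub_ge {x y : ℝ} (hy : 0 < y) (hx1 : x ≤ 1) (hyx : y ≤ x) :
    x - y ≤ Real.log x - Real.log y := by
  have hx : 0 < x := lt_of_lt_of_le hy hyx
  have h := Real.log_le_sub_one_of_pos (div_pos hy hx)
  rw [Real.log_div hy.ne' hx.ne'] at h
  have h2 : 1 - y / x ≤ Real.log x - Real.log y := by linarith
  have h3 : x - y ≤ 1 - y / x := by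
    have : y / x * x = y := div_mul_cancel₀ y hx.ne'
    nlinarith [div_nonneg hy.le hx.le]
  linarith

lemma log_prod_ineq {x y : ℝ} (hx : 0 < x) (hx1 : x ≤ 1) (hy : 0 < y) (hy1 : y ≤ 1) :
    (x - y) ^ 2 ≤ (Real.log x - Real.log y) * (x - y) := by
  rcases le_total y x with h | h
  · nlinarith [log_sub_ge hy hx1 h]
  · nlinarith [log_sub_ge hx hy1 h]

lemma sub_decomp {m : ℕ} {ε : ℝ} (hε : 0 < ε) (w wb : Fin m → ℝ) (i : Fin m) :
    w i - wb i = ε * (Real.log (softmax ε w i) - Real.log (softmax ε wb i))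
      + (lse ε w - lse ε wb) := by
  have h1 := log_softmax hε w i
  have h2 := log_softmax hε wb i
  rw [mul_sub]
  linarith

/-- Gibbs inequality: nonnegativity of the per-block Bregman divergence. -/
lemma gibbs {m : ℕ} {ε : ℝ} (hε : 0 < ε) (w wb : Fin m → ℝ) :
    0 ≤ lse ε w - lse ε wb - ∑ i, softmax ε wb i * (w i - wb i) := by
  rcases Nat.eq_zero_or_pos m with hm | hm
  · subst hm
    simp [lse]
  · have hrw : ∑ i, softmax ε wb i * (w i - wb i)
        = ε * (∑ i, softmax ε wb i * (Real.log (softmax ε w i) - Real.log (softmax ε wb i)))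
          + (lse ε w - lse ε wb) := by
      rw [Finset.mul_sum]
      have : ∀ i ∈ Finset.univ, softmax ε wb i * (w i - wb i)
          = ε * (softmax ε wb i * (Real.log (softmax ε w i) - Real.log (softmax ε wb i)))
            + (lse ε w - lse ε wb) * softmax ε wb i := by
        intro i _
        rw [sub_decomp hε w wb i]
        ring
      rw [Finset.sum_congr rfl this, Finset.sum_add_distrib, ← Finset.mul_sum,
        ← Finset.mul_sum, sum_softmax hm ε wb, mul_one]
    have hle : ∑ i, softmax ε wb i * (Real.log (softmax ε w i) - Real.log (softmax ε wb i)) ≤ 0 := by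
      have h0 : ∀ i ∈ Finset.univ,
          softmax ε wb i * (Real.log (softmax ε w i) - Real.log (softmax ε wb i))
            ≤ softmax ε w i - softmax ε wb i := by
        intro i _
        have hp := softmax_pos ε w i
        have hq := softmax_pos ε wb i
        have h := Real.log_le_sub_one_of_pos (div_pos hp hq)
        rw [Real.log_div hp.ne' hq.ne'] at h
        have : (softmax ε w i / softmax ε wb i) * softmax ε wb i = softmax ε w i :=
          div_mul_cancel₀ _ hq.ne'
        nlinarith
      calc ∑ i, softmax ε wb i * (Real.log (softmax ε w i) - Real.log (softmax ε wb i))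
          ≤ ∑ i, (softmax ε w i - softmax ε wb i) := Finset.sum_le_sum h0
        _ = 0 := by
            rw [Finset.sum_sub_distrib, sum_softmax hm ε w, sum_softmax hm ε wb, sub_self]
    rw [hrw]
    nlinarith

/-- Co-coercivity-type monotonicity of softmax, per block. -/
lemma block_mono {m : ℕ} {ε : ℝ} (hε : 0 < ε) (w wb : Fin m → ℝ) :
    ε * ∑ i, (softmax ε w i - softmax ε wb i) ^ 2
      ≤ ∑ i, (w i - wb i) * (softmax ε w i - softmax ε wb i) := by
  rcases Nat.eq_zero_or_pos m with hm | hm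
  · subst hm
    simp
  · have hrw : ∑ i, (w i - wb i) * (softmax ε w i - softmax ε wb i)
        = ε * ∑ i, (Real.log (softmax ε w i) - Real.log (softmax ε wb i))
            * (softmax ε w i - softmax ε wb i) := by
      rw [Finset.mul_sum]
      have : ∀ i ∈ Finset.univ, (w i - wb i) * (softmax ε w i - softmax ε wb i)
          = ε * ((Real.log (softmax ε w i) - Real.log (softmax ε wb i))
              * (softmax ε w i - softmax ε wb i))
            + (lse ε w - lse ε wb) * (softmax ε w i - softmax ε wb i) := by
        intro i _
        rw [sub_decomp hε w wb i]
        ring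
      rw [Finset.sum_congr rfl this, Finset.sum_add_distrib, ← Finset.mul_sum,
        ← Finset.mul_sum, Finset.sum_sub_distrib, sum_softmax hm ε w, sum_softmax hm ε wb, sub_self,
        mul_zero, add_zero]
    rw [hrw]
    refine mul_le_mul_of_nonneg_left (Finset.sum_le_sum fun i _ => ?_) hε.le
    exact log_prod_ineq (softmax_pos ε w i) (softmax_le_one ε w i)
      (softmax_pos ε wb i) (softmax_le_one ε wb i)

/-- Chain rule for `lse`. -/
lemma hasDerivAt_lse {m : ℕ} {ε : ℝ} (hε : 0 < ε) {w : ℝ → Fin m → ℝ} {w' : Fin m → ℝ}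
    {t : ℝ} (hw : ∀ i, HasDerivAt (fun s => w s i) (w' i) t) :
    HasDerivAt (fun s => lse ε (w s)) (∑ i, softmax ε (w t) i * w' i) t := by
  rcases Nat.eq_zero_or_pos m with hm | hm
  · subst hm
    have : (fun s => lse ε (w s)) = fun _ => (0 : ℝ) := by
      funext s
      simp [lse]
    rw [this]
    simpa using hasDerivAt_const t (0 : ℝ)
  · have hS : 0 < ∑ j, Real.exp (w t j / ε) := sumexp_pos hm ε (w t)
    have h1 : HasDerivAt (fun s => ∑ j, Real.exp (w s j / ε))
        (∑ j, Real.exp (w t j / ε) * (w' j / ε)) t :=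
      HasDerivAt.fun_sum fun j _ => ((hw j).div_const ε).exp
    have h2 := (h1.log hS.ne').const_mul ε
    refine h2.congr_deriv ?_
    symm
    rw [← mul_div_assoc, Finset.mul_sum, Finset.sum_div]
    refine Finset.sum_congr rfl fun j _ => ?_
    unfold softmax
    field_simp

/-- Output-strict equilibrium-independent passivity of the learning block:
the storage function `V` is nonnegative, vanishes at `z̄`, and along any solution of
`ż = γ(u − z)` its derivative satisfies
`d/dt V(z(t)) ≤ −γε‖σ(z(t)) − σ(z̄)‖₂² + γ(σ(z(t)) − σ(z̄))ᵀ(u(t) − z̄)`. -/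
theorem learning_block_OSEIP (ε γ : ℝ) (hε : 0 < ε) (hγ : 0 < γ)
    (N : ℕ) (nAct : Fin N → ℕ)
    (zbar : ∀ p, Fin (nAct p) → ℝ)
    (z u : ℝ → ∀ p, Fin (nAct p) → ℝ) (hu_cont : Continuous u)
    (hz : ∀ t, ∀ p, ∀ i, HasDerivAt (fun s => z s p i) (γ * (u t p i - z t p i)) t) :
    (∀ w, 0 ≤ bregV ε zbar w) ∧ bregV ε zbar zbar = 0 ∧
      ∀ t, deriv (fun s => bregV ε zbar (z s)) t ≤
        -γ * ε * ∑ p, ∑ i, (softmax ε (z t p) i - softmax ε (zbar p) i) ^ 2 +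
          γ * ∑ p, ∑ i, (softmax ε (z t p) i - softmax ε (zbar p) i) * (u t p i - zbar p i) := by
  refine ⟨fun w => Finset.sum_nonneg fun p _ => gibbs hε (w p) (zbar p), by simp [bregV], fun t => ?_⟩
  have hfun : (fun s => bregV ε zbar (z s))
      = fun s => ∑ p, (lse ε (z s p) - lse ε (zbar p)
          - ∑ i, softmax ε (zbar p) i * (z s p i - zbar p i)) := rfl
  have hder : HasDerivAt (fun s => ∑ p, (lse ε (z s p) - lse ε (zbar p)
        - ∑ i, softmax ε (zbar p) i * (z s p i - zbar p i)))
      (∑ p, ((∑ i, softmax ε (z t p) i * (γ * (u t p i - z t p i)))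
        - ∑ i, softmax ε (zbar p) i * (γ * (u t p i - z t p i)))) t := by
    refine HasDerivAt.fun_sum fun p _ => ?_
    have hA := hasDerivAt_lse hε (w := fun s => z s p) (fun i => hz t p i)
    have hB : HasDerivAt (fun s => ∑ i, softmax ε (zbar p) i * (z s p i - zbar p i))
        (∑ i, softmax ε (zbar p) i * (γ * (u t p i - z t p i))) t :=
      HasDerivAt.fun_sum fun i _ => ((hz t p i).sub_const _).const_mul _
    exact (hA.sub_const _).sub hB
  rw [hfun, hder.deriv]
  have hEq : (∑ p, ((∑ i, softmax ε (z t p) i * (γ * (u t p i - z t p i)))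
        - ∑ i, softmax ε (zbar p) i * (γ * (u t p i - z t p i))))
      = γ * (∑ p, ∑ i, (softmax ε (z t p) i - softmax ε (zbar p) i) * (u t p i - zbar p i))
        - γ * (∑ p, ∑ i, (z t p i - zbar p i)
            * (softmax ε (z t p) i - softmax ε (zbar p) i)) := by
    rw [Finset.mul_sum, Finset.mul_sum, ← Finset.sum_sub_distrib]
    refine Finset.sum_congr rfl fun p _ => ?_
    rw [Finset.mul_sum, Finset.mul_sum, ← Finset.sum_sub_distrib, ← Finset.sum_sub_distrib]
    exact Finset.sum_congr rfl fun i _ => by ring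
  have hsum : ε * ∑ p, ∑ i, (softmax ε (z t p) i - softmax ε (zbar p) i) ^ 2
      ≤ ∑ p, ∑ i, (z t p i - zbar p i) * (softmax ε (z t p) i - softmax ε (zbar p) i) := by
    rw [Finset.mul_sum]
    exact Finset.sum_le_sum fun p _ => block_mono hε (z t p) (zbar p)
  have := mul_le_mul_of_nonneg_left hsum hγ.le
  rw [hEq]
  nlinarith [this]
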